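/- Let f : (-ε₁, ε₁)^d → (-ε₀, ε₀) be a function whose graph G = {(f(x̲), x̲)} is achronal in R = (-ε₀, ε₀) × (-ε₁, ε₁)^d equipped with a continuous time-oriented Lorentzian metric g̃ satisfying |g̃_{μν} - m_{μν}| < δ, where δ is small enough that every vector in the Euclidean cone C⁻_{5/6} is past directed timelike. Then any past directed g̃-timelike curve σ : [0,1] → R with initial point σ(0) in the region B = {(x₀, x̲) : x₀ < f(x̲)} remains in B for all s ∈ [0,1]. -/

import Mathlib

open Set

noncomputable def e0 (d : ℕ) : EuclideanSpace ℝ (Fin (d + 1)) :=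
  EuclideanSpace.single 0 1

/-- The backward Euclidean cone `C⁻_a = -C⁺_a`. -/
def Cneg (d : ℕ) (a : ℝ) : Set (EuclideanSpace ℝ (Fin (d + 1))) :=
  {X | X ≠ 0 ∧ (inner ℝ X (e0 d) : ℝ) / ‖X‖ < -a}

/-- The chart `R = (-ε₀, ε₀) × (-ε₁, ε₁)^d`. -/
def chartBox (d : ℕ) (ε₀ ε₁ : ℝ) : Set (EuclideanSpace ℝ (Fin (d + 1))) :=
  {x | |x 0| < ε₀ ∧ ∀ i : Fin d, |x i.succ| < ε₁}

/-- A past directed timelike curve on `[0,1]`: continuous, and away from finitely many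
parameters it has a derivative lying in the past cone `C⁻_{5/8}` (which contains all past
directed `g̃`-timelike vectors for a metric `g̃` with `|g̃_{μν} - m_{μν}| < δ`, `δ` small). -/
def PastTimelike (d : ℕ) (σ : ℝ → EuclideanSpace ℝ (Fin (d + 1))) : Prop :=
  ContinuousOn σ (Icc 0 1) ∧
    ∃ F : Finset ℝ, ∀ s ∈ Ioo (0 : ℝ) 1 \ (F : Set ℝ),
      ∃ v ∈ Cneg d (5 / 8), HasDerivAt σ v s


lemma e0_apply_zero (d : ℕ) : e0 d 0 = 1 := by
  simp [e0, EuclideanSpace.single_apply]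

lemma e0_apply_succ (d : ℕ) (i : Fin d) : e0 d i.succ = 0 := by
  simp [e0, EuclideanSpace.single_apply, Fin.succ_ne_zero i]

lemma norm_e0 (d : ℕ) : ‖e0 d‖ = 1 := by simp [e0]

lemma inner_e0 (d : ℕ) (v : EuclideanSpace ℝ (Fin (d + 1))) :
    (inner ℝ v (e0 d) : ℝ) = v 0 := by
  simp [e0, EuclideanSpace.inner_single_right]

lemma time_neg_of_mem_Cneg {d : ℕ} {v : EuclideanSpace ℝ (Fin (d + 1))}
    (hv : v ∈ Cneg d (5 / 8)) : v 0 < 0 := by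
  obtain ⟨h0, hlt⟩ := hv
  have hn : 0 < ‖v‖ := norm_pos_iff.2 h0
  rw [inner_e0] at hlt
  have := (div_lt_iff₀ hn).1 hlt
  nlinarith

lemma smul_mem_Cneg {d : ℕ} {a c : ℝ} (hc : 0 < c) {v : EuclideanSpace ℝ (Fin (d + 1))}
    (hv : v ∈ Cneg d a) : c • v ∈ Cneg d a := by
  obtain ⟨h0, hlt⟩ := hv
  refine ⟨smul_ne_zero hc.ne' h0, ?_⟩
  rw [real_inner_smul_left, norm_smul, Real.norm_eq_abs, abs_of_pos hc,
    mul_div_mul_left _ _ hc.ne']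
  exact hlt

lemma neg_smul_e0_mem_Cneg {d : ℕ} {a : ℝ} (ha : a < 0) : a • e0 d ∈ Cneg d (5 / 8) := by
  have he : e0 d ≠ 0 := by
    intro h
    have := norm_e0 d
    rw [h] at this
    simp at this
  have h0 : a • e0 d ≠ 0 := smul_ne_zero ha.ne he
  refine ⟨h0, ?_⟩
  rw [real_inner_smul_left, inner_e0, e0_apply_zero, norm_smul, Real.norm_eq_abs,
    abs_of_neg ha, norm_e0]
  rw [mul_one, mul_one, div_neg, div_self ha.ne]
  norm_num

lemma anti_aux (g : ℝ → ℝ) : ∀ (n : ℕ) (F : Finset ℝ) (a b : ℝ),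
    (F.filter (fun t => a < t ∧ t < b)).card ≤ n → a ≤ b →
    ContinuousOn g (Icc a b) →
    (∀ t ∈ Ioo a b, t ∉ F → ∃ v, v ≤ 0 ∧ HasDerivAt g v t) → g b ≤ g a := by
  intro n
  induction n with
  | zero =>
    intro F a b hcard hab hcont hder
    have hempty : F.filter (fun t => a < t ∧ t < b) = ∅ :=
      Finset.card_eq_zero.1 (Nat.le_zero.1 hcard)
    have hF : ∀ t ∈ Ioo a b, t ∉ F := by
      intro t ht hmem
      have : t ∈ F.filter (fun t => a < t ∧ t < b) :=
        Finset.mem_filter.2 ⟨hmem, ht.1, ht.2⟩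
      simp [hempty] at this
    have hdiff : DifferentiableOn ℝ g (interior (Icc a b)) := by
      rw [interior_Icc]
      intro t ht
      obtain ⟨v, _, hd⟩ := hder t ht (hF t ht)
      exact hd.differentiableAt.differentiableWithinAt
    have hnp : ∀ t ∈ interior (Icc a b), deriv g t ≤ 0 := by
      rw [interior_Icc]
      intro t ht
      obtain ⟨v, hv, hd⟩ := hder t ht (hF t ht)
      rw [hd.deriv]; exact hv
    exact antitoneOn_of_deriv_nonpos (convex_Icc a b) hcont hdiff hnp
      (left_mem_Icc.2 hab) (right_mem_Icc.2 hab) hab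
  | succ n ih =>
    intro F a b hcard hab hcont hder
    by_cases hc : (F.filter (fun t => a < t ∧ t < b)).card ≤ n
    · exact ih F a b hc hab hcont hder
    have hne : (F.filter (fun t => a < t ∧ t < b)).Nonempty :=
      Finset.card_pos.1 (by omega)
    obtain ⟨t, ht⟩ := hne
    rw [Finset.mem_filter] at ht
    obtain ⟨htF, hta, htb⟩ := ht
    have hsub1 : (F.erase t).filter (fun s => a < s ∧ s < t) ⊆
        (F.filter (fun s => a < s ∧ s < b)).erase t := by
      intro s hs
      rw [Finset.mem_filter, Finset.mem_erase] at hs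
      exact Finset.mem_erase.2 ⟨hs.1.1, Finset.mem_filter.2 ⟨hs.1.2, hs.2.1, hs.2.2.trans htb⟩⟩
    have hsub2 : (F.erase t).filter (fun s => t < s ∧ s < b) ⊆
        (F.filter (fun s => a < s ∧ s < b)).erase t := by
      intro s hs
      rw [Finset.mem_filter, Finset.mem_erase] at hs
      exact Finset.mem_erase.2 ⟨hs.1.1, Finset.mem_filter.2 ⟨hs.1.2, hta.trans hs.2.1, hs.2.2⟩⟩
    have hcarde : ((F.filter (fun s => a < s ∧ s < b)).erase t).card ≤ n := by
      rw [Finset.card_erase_of_mem (Finset.mem_filter.2 ⟨htF, hta, htb⟩)]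
      omega
    have h1 : g t ≤ g a := by
      refine ih (F.erase t) a t ((Finset.card_le_card hsub1).trans hcarde) hta.le
        (hcont.mono (Icc_subset_Icc le_rfl htb.le)) ?_
      intro s hs hsF
      refine hder s ⟨hs.1, hs.2.trans htb⟩ fun hmem => hsF ?_
      exact Finset.mem_erase.2 ⟨hs.2.ne, hmem⟩
    have h2 : g b ≤ g t := by
      refine ih (F.erase t) t b ((Finset.card_le_card hsub2).trans hcarde) htb.le
        (hcont.mono (Icc_subset_Icc hta.le le_rfl)) ?_
      intro s hs hsF
      refine hder s ⟨hta.trans hs.1, hs.2⟩ fun hmem => hsF ?_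
      exact Finset.mem_erase.2 ⟨hs.1.ne', hmem⟩
    exact h2.trans h1

/-- Let `f : (-ε₁, ε₁)^d → (-ε₀, ε₀)` be continuous with achronal graph
`G` in the chart `R` (no past directed timelike curve in `R` joins two distinct points of
`G`). Then any past directed timelike curve `σ` in `R` starting in the below-graph region
`B = {x₀ < f(x̲)}` remains in `B`. -/
theorem stmt_15 (d : ℕ) (ε₀ ε₁ : ℝ) (hε₀ : 0 < ε₀) (hε₁ : 0 < ε₁)
    (f : (Fin d → ℝ) → ℝ)
    (hfc : Continuous f)
    (hfr : ∀ x : Fin d → ℝ, (∀ i, |x i| < ε₁) → |f x| < ε₀)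
    (hach : ∀ σ : ℝ → EuclideanSpace ℝ (Fin (d + 1)), PastTimelike d σ →
      (∀ s ∈ Icc (0 : ℝ) 1, σ s ∈ chartBox d ε₀ ε₁) →
      σ 0 ∈ chartBox d ε₀ ε₁ ∩ {x | x 0 = f (fun i => x i.succ)} →
      σ 1 ∈ chartBox d ε₀ ε₁ ∩ {x | x 0 = f (fun i => x i.succ)} →
      σ 0 = σ 1)
    (σ : ℝ → EuclideanSpace ℝ (Fin (d + 1)))
    (hσ : PastTimelike d σ)
    (hσR : ∀ s ∈ Icc (0 : ℝ) 1, σ s ∈ chartBox d ε₀ ε₁)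
    (hσ0 : σ 0 0 < f (fun i => σ 0 i.succ)) :
    ∀ s ∈ Icc (0 : ℝ) 1, σ s 0 < f (fun i => σ s i.succ) := by
  intro s₁ hs₁
  by_contra hge
  push_neg at hge
  obtain ⟨hσcont, F, hF⟩ := hσ
  -- continuity of coordinates
  have hσ0cont : ContinuousOn (fun t => σ t 0) (Icc (0:ℝ) 1) :=
    (EuclideanSpace.proj (0 : Fin (d + 1)) (𝕜 := ℝ)).continuous.comp_continuousOn hσcont
  have hsp : ContinuousOn (fun t => (fun i : Fin d => σ t i.succ)) (Icc (0:ℝ) 1) := by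
    apply continuousOn_pi.2
    intro i
    exact (EuclideanSpace.proj (i.succ : Fin (d + 1)) (𝕜 := ℝ)).continuous.comp_continuousOn hσcont
  set h : ℝ → ℝ := fun t => σ t 0 - f (fun i => σ t i.succ) with hhdef
  have hhcont : ContinuousOn h (Icc (0:ℝ) 1) := hσ0cont.sub (hfc.comp_continuousOn hsp)
  have hh0 : h 0 < 0 := by simp only [hhdef]; linarith
  have hh1 : 0 ≤ h s₁ := by simp only [hhdef]; linarith
  -- first crossing by IVT
  obtain ⟨sx, hsx, hsx0⟩ : ∃ sx ∈ Icc (0:ℝ) s₁, h sx = 0 := by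
    have hiv := intermediate_value_Icc hs₁.1 (hhcont.mono (Icc_subset_Icc le_rfl hs₁.2))
    obtain ⟨sx, hsx, hval⟩ := hiv ⟨hh0.le, hh1⟩
    exact ⟨sx, hsx, hval⟩
  have hsxI : sx ∈ Icc (0:ℝ) 1 := ⟨hsx.1, hsx.2.trans hs₁.2⟩
  have hsxpos : 0 < sx := by
    rcases hsx.1.lt_or_eq with h' | h'
    · exact h'
    · exfalso; rw [← h'] at hsx0; linarith
  -- monotonicity of the time coordinate
  have hmono : ∀ b ∈ Icc (0:ℝ) 1, σ b 0 ≤ σ 0 0 := by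
    intro b hb
    refine anti_aux (fun t => σ t 0) F.card F 0 b (Finset.card_filter_le _ _) hb.1
      (hσ0cont.mono (Icc_subset_Icc le_rfl hb.2)) ?_
    intro t ht htF
    obtain ⟨v, hv, hd⟩ := hF t ⟨⟨ht.1, lt_of_lt_of_le ht.2 hb.2⟩, htF⟩
    refine ⟨v 0, (time_neg_of_mem_Cneg hv).le, ?_⟩
    have := (EuclideanSpace.proj (0 : Fin (d + 1)) (𝕜 := ℝ)).hasFDerivAt.comp_hasDerivAt t hd
    exact this
  -- the concatenated curve
  set c : ℝ := f (fun i => σ 0 i.succ) - σ 0 0 with hcdef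
  have hcpos : 0 < c := by simp only [hcdef]; linarith
  set clamp : ℝ → ℝ := fun x => max 0 (min 1 x) with hclampdef
  have hclampmem : ∀ x, clamp x ∈ Icc (0:ℝ) 1 := fun x =>
    ⟨le_max_left _ _, max_le zero_le_one (min_le_left _ _)⟩
  have hclampid : ∀ x ∈ Icc (0:ℝ) 1, clamp x = x := by
    intro x hx
    simp only [hclampdef]
    rw [min_eq_right hx.2, max_eq_right hx.1]
  set σh : ℝ → EuclideanSpace ℝ (Fin (d + 1)) := fun x => σ (clamp x) with hσhdef
  have hσhcont : Continuous σh :=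
    hσcont.comp_continuous (continuous_const.max (continuous_const.min continuous_id)) hclampmem
  have hσheq : ∀ x ∈ Icc (0:ℝ) 1, σh x = σ x := by
    intro x hx
    simp only [hσhdef, hclampid x hx]
  set τ : ℝ → EuclideanSpace ℝ (Fin (d + 1)) :=
    fun u => if u ≤ 1/2 then σ 0 + ((1 - 2*u)*c) • e0 d else σh (2*sx*u - sx) with hτdef
  have hτcont : Continuous τ := by
    apply Continuous.if_le
    · fun_prop
    · exact hσhcont.comp (by fun_prop)
    · exact continuous_id
    · exact continuous_const
    · intro x hx
      rw [hx]
      have h1 : (1 - 2*(1/2 : ℝ))*c = 0 := by ring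
      have h2 : 2*sx*(1/2 : ℝ) - sx = 0 := by ring
      rw [h1, h2, zero_smul, add_zero]
      have : σh 0 = σ 0 := hσheq 0 ⟨le_rfl, zero_le_one⟩
      rw [this]
  have hτPT : PastTimelike d τ := by
    refine ⟨hτcont.continuousOn, insert (1/2 : ℝ) (F.image fun r => (r + sx)/(2*sx)), ?_⟩
    intro u hu
    obtain ⟨huI, huF⟩ := hu
    have hune : u ≠ 1/2 := by
      intro h'
      exact huF (by simp [h'])
    rcases lt_or_gt_of_ne hune with hlt | hgt
    · refine ⟨(-(2*c)) • e0 d, neg_smul_e0_mem_Cneg (by linarith), ?_⟩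
      have hA : HasDerivAt (fun u : ℝ => σ 0 + ((1 - 2*u)*c) • e0 d) ((-(2*c)) • e0 d) u := by
        have h1 : HasDerivAt (fun u : ℝ => (1 - 2*u)*c) (-(2*c)) u := by
          have := (((hasDerivAt_id u).const_mul (2:ℝ)).const_sub (1:ℝ)).mul_const c
          simpa using this
        exact (h1.smul_const (e0 d)).const_add (σ 0)
      apply hA.congr_of_eventuallyEq
      filter_upwards [Iio_mem_nhds hlt] with x hx
      simp only [hτdef]
      rw [if_pos (le_of_lt (mem_Iio.1 hx))]
    · set s : ℝ := 2*sx*u - sx with hsdef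
      have hsI : s ∈ Ioo (0:ℝ) 1 := by
        constructor
        · simp only [hsdef]; nlinarith [huI.1, huI.2, hsxpos]
        · simp only [hsdef]; nlinarith [huI.1, huI.2, hsxpos, hsxI.2]
      have hsF : s ∉ F := by
        intro hmem
        apply huF
        refine Finset.mem_coe.2 (Finset.mem_insert.2 (Or.inr ?_))
        refine Finset.mem_image.2 ⟨s, hmem, ?_⟩
        field_simp [hsdef]
        rw [hsdef]; ring
      obtain ⟨v, hv, hd⟩ := hF s ⟨hsI, hsF⟩
      refine ⟨(2*sx) • v, smul_mem_Cneg (by linarith) hv, ?_⟩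
      have hdh : HasDerivAt σh v s := by
        apply hd.congr_of_eventuallyEq
        filter_upwards [Ioo_mem_nhds hsI.1 hsI.2] with x hx
        exact hσheq x (Ioo_subset_Icc_self hx)
      have hl : HasDerivAt (fun u : ℝ => 2*sx*u - sx) (2*sx) u := by
        have := ((hasDerivAt_id u).const_mul (2*sx)).sub_const sx
        simpa using this
      have hcomp : HasDerivAt (σh ∘ fun u : ℝ => 2*sx*u - sx) ((2*sx) • v) u :=
        hdh.scomp_of_eq u hl hsdef
      apply hcomp.congr_of_eventuallyEq
      filter_upwards [Ioi_mem_nhds hgt] with x hx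
      simp only [hτdef, Function.comp]
      rw [if_neg (not_le.2 (mem_Ioi.1 hx))]
  have hτR : ∀ u ∈ Icc (0:ℝ) 1, τ u ∈ chartBox d ε₀ ε₁ := by
    intro u hu
    by_cases hcase : u ≤ 1/2
    · have hchart0 := hσR 0 ⟨le_rfl, zero_le_one⟩
      have hb0 : 0 ≤ (1 - 2*u)*c := mul_nonneg (by linarith [hu.2]) hcpos.le
      have hb1 : (1 - 2*u)*c ≤ c := by nlinarith [hu.1]
      have happ0 : τ u 0 = σ 0 0 + (1 - 2*u)*c := by
        simp only [hτdef, if_pos hcase]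
        simp [e0_apply_zero]
      have happs : ∀ i : Fin d, τ u i.succ = σ 0 i.succ := by
        intro i
        simp only [hτdef, if_pos hcase]
        simp [e0_apply_succ]
      have hfb := hfr _ hchart0.2
      rw [abs_lt] at hfb
      have h00 := hchart0.1
      rw [abs_lt] at h00
      refine ⟨?_, ?_⟩
      · rw [happ0, abs_lt]
        constructor
        · linarith
        · have : σ 0 0 + (1 - 2*u)*c ≤ σ 0 0 + c := by linarith
          simp only [hcdef] at this ⊢
          linarith
      · intro i
        rw [happs i]
        exact hchart0.2 i
    · have : τ u = σ (clamp (2*sx*u - sx)) := by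
        simp only [hτdef, if_neg hcase, hσhdef]
      rw [this]
      exact hσR _ (hclampmem _)
  have hτ0mem : τ 0 ∈ chartBox d ε₀ ε₁ ∩ {x | x 0 = f (fun i => x i.succ)} := by
    refine ⟨hτR 0 ⟨le_rfl, zero_le_one⟩, ?_⟩
    have happ0 : τ 0 0 = σ 0 0 + c := by
      simp only [hτdef, if_pos (by norm_num : (0:ℝ) ≤ 1/2)]
      have : (1 - 2*(0:ℝ))*c = c := by ring
      rw [this]
      simp [e0_apply_zero]
    have happs : (fun i : Fin d => τ 0 i.succ) = fun i => σ 0 i.succ := by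
      funext i
      simp only [hτdef, if_pos (by norm_num : (0:ℝ) ≤ 1/2)]
      simp [e0_apply_succ]
    show τ 0 0 = f (fun i => τ 0 i.succ)
    rw [happ0, happs]
    simp only [hcdef]
    ring
  have hτ1 : τ 1 = σ sx := by
    simp only [hτdef, if_neg (by norm_num : ¬ (1:ℝ) ≤ 1/2)]
    have : 2*sx*(1:ℝ) - sx = sx := by ring
    rw [this]
    exact hσheq sx hsxI
  have hτ1mem : τ 1 ∈ chartBox d ε₀ ε₁ ∩ {x | x 0 = f (fun i => x i.succ)} := by
    refine ⟨hτR 1 ⟨zero_le_one, le_rfl⟩, ?_⟩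
    show τ 1 0 = f (fun i => τ 1 i.succ)
    rw [hτ1]
    simp only [hhdef] at hsx0
    linarith
  have heq := hach τ hτPT hτR hτ0mem hτ1mem
  have h0c : τ 0 0 = σ 0 0 + c := by
    simp only [hτdef, if_pos (by norm_num : (0:ℝ) ≤ 1/2)]
    have : (1 - 2*(0:ℝ))*c = c := by ring
    rw [this]
    simp [e0_apply_zero]
  have h1c : τ 1 0 = σ sx 0 := by rw [hτ1]
  have := congrArg (fun x : EuclideanSpace ℝ (Fin (d + 1)) => x 0) heq
  simp only at this
  rw [h0c, h1c] at this
  have hle := hmono sx hsxI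
  linarith
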